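/- Let x ∈ ℝ^n be a vector with ‖x‖_0 = δ nonzero entries, and let y ∈ {0,1}^n satisfy x_i y_i = 0 for all i and Σ_i y_i ≥ n - s, where δ ≤ s. Then for every ŷ ∈ {0,1}^n with Σ_i ŷ_i = n - s and x_i ŷ_i = 0 for all i, we have d_H(y, ŷ) ≤ 2(s - δ). -/
import Mathlib


/-- If `‖x‖₀ = δ ≤ s`, `y` is binary with `xᵢyᵢ = 0` and `∑ yᵢ ≥ n - s`, then for any
binary `yhat` with `∑ yhatᵢ = n - s` and `xᵢyhatᵢ = 0`, the Hamming distance satisfies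
`d_H(y, yhat) ≤ 2(s - δ)`. -/
theorem stmt_2 (n δ s : ℕ) (hsn : s < n) (hδs : δ ≤ s)
    (x y yhat : Fin n → ℝ)
    (hδ : {i | x i ≠ 0}.ncard = δ)
    (hy : ∀ i, y i = 0 ∨ y i = 1)
    (hxy : ∀ i, x i * y i = 0)
    (hysum : ((n : ℝ) - s) ≤ ∑ i, y i)
    (hyhat : ∀ i, yhat i = 0 ∨ yhat i = 1)
    (hyhatsum : ∑ i, yhat i = (n : ℝ) - s)
    (hxyhat : ∀ i, x i * yhat i = 0) :
    {i | y i ≠ yhat i}.ncard ≤ 2 * (s - δ) := by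
  classical
  set A : Finset (Fin n) := Finset.univ.filter (fun i => x i ≠ 0) with hAdef
  set S : Finset (Fin n) := Finset.univ.filter (fun i => y i = 1) with hSdef
  set T : Finset (Fin n) := Finset.univ.filter (fun i => yhat i = 1) with hTdef
  have hA : A.card = δ := by
    rw [← hδ, Set.ncard_eq_toFinset_card']
    congr 1
    ext i
    simp [hAdef]
  have hδn : δ ≤ n := le_of_lt (lt_of_le_of_lt hδs hsn)
  -- sum of a binary vector equals card of its support
  have sumcard : ∀ z : Fin n → ℝ, (∀ i, z i = 0 ∨ z i = 1) →
      ∑ i, z i = (Finset.univ.filter (fun i => z i = 1)).card := by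
    intro z hz
    rw [← Finset.sum_filter_add_sum_filter_not Finset.univ (fun i => z i = 1)]
    have h1 : ∑ i ∈ Finset.univ.filter (fun i => z i = 1), z i
        = (Finset.univ.filter (fun i => z i = 1)).card := by
      rw [Finset.sum_congr rfl (fun i hi => (Finset.mem_filter.mp hi).2)]
      simp
    have h2 : ∑ i ∈ Finset.univ.filter (fun i => ¬ z i = 1), z i = 0 := by
      apply Finset.sum_eq_zero
      intro i hi
      rcases hz i with h | h
      · exact h
      · exact absurd h (Finset.mem_filter.mp hi).2
    rw [h1, h2, add_zero]
  have hSsum : ∑ i, y i = (S.card : ℝ) := sumcard y hy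
  have hTsum : ∑ i, yhat i = (T.card : ℝ) := sumcard yhat hyhat
  have hScard : n - s ≤ S.card := by
    rw [hSsum] at hysum
    have : ((n - s : ℕ) : ℝ) ≤ (S.card : ℝ) := by
      rw [Nat.cast_sub (le_of_lt hsn)]; exact hysum
    exact_mod_cast this
  have hTcard : T.card = n - s := by
    rw [hTsum] at hyhatsum
    have : ((T.card : ℕ) : ℝ) = ((n - s : ℕ) : ℝ) := by
      rw [Nat.cast_sub (le_of_lt hsn)]; exact hyhatsum
    exact_mod_cast this
  -- supports are in the complement of A
  have hSA : S ⊆ Aᶜ := by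
    intro i hi
    simp only [hSdef, Finset.mem_filter] at hi
    simp only [hAdef, Finset.mem_compl, Finset.mem_filter, Finset.mem_univ, true_and, not_not]
    have := hxy i
    rw [hi.2, mul_one] at this
    exact this
  have hTA : T ⊆ Aᶜ := by
    intro i hi
    simp only [hTdef, Finset.mem_filter] at hi
    simp only [hAdef, Finset.mem_compl, Finset.mem_filter, Finset.mem_univ, true_and, not_not]
    have := hxyhat i
    rw [hi.2, mul_one] at this
    exact this
  have hAc : Aᶜ.card = n - δ := by
    rw [Finset.card_compl, hA]; simp
  set D : Finset (Fin n) := Finset.univ.filter (fun i => y i ≠ yhat i) with hDdef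
  have hD : {i | y i ≠ yhat i}.ncard = D.card := by
    rw [Set.ncard_eq_toFinset_card']
    congr 1
    ext i
    simp [hDdef]
  have hDsub : D ⊆ (S \ T) ∪ (T \ S) := by
    intro i hi
    simp only [hDdef, Finset.mem_filter, Finset.mem_univ, true_and] at hi
    simp only [Finset.mem_union, Finset.mem_sdiff, hSdef, hTdef, Finset.mem_filter,
      Finset.mem_univ, true_and]
    rcases hy i with h1 | h1 <;> rcases hyhat i with h2 | h2
    · exact absurd (h1.trans h2.symm) hi
    · right; constructor
      · exact h2
      · rw [h1]; norm_num
    · left; constructor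
      · exact h1
      · rw [h2]; norm_num
    · exact absurd (h1.trans h2.symm) hi
  have h1 : (S \ T).card ≤ Aᶜ.card - T.card := by
    have : S \ T ⊆ Aᶜ \ T := Finset.sdiff_subset_sdiff hSA (le_refl _)
    calc (S \ T).card ≤ (Aᶜ \ T).card := Finset.card_le_card this
      _ = Aᶜ.card - T.card := Finset.card_sdiff_of_subset hTA
  have h2 : (T \ S).card ≤ Aᶜ.card - S.card := by
    have : T \ S ⊆ Aᶜ \ S := Finset.sdiff_subset_sdiff hTA (le_refl _)
    calc (T \ S).card ≤ (Aᶜ \ S).card := Finset.card_le_card this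
      _ = Aᶜ.card - S.card := Finset.card_sdiff_of_subset hSA
  have hScard' : S.card ≤ Aᶜ.card := Finset.card_le_card hSA
  have hDcard : D.card ≤ (S \ T).card + (T \ S).card :=
    (Finset.card_le_card hDsub).trans (Finset.card_union_le _ _)
  rw [hD]
  omega
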